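/- Let E be a real locally convex Hausdorff space with the metric convex compactness property. Then every finite metrically regular Borel measure μ concentrated on a bounded subset D of E has a barycenter in E. -/

import Mathlib

open MeasureTheory Set

open Filter Topology Bornology TopologicalSpace Pointwise
open scoped ENNReal

set_option linter.unusedSectionVars false

variable {E : Type*} [AddCommGroup E] [Module ℝ E] [TopologicalSpace E]
  [IsTopologicalAddGroup E] [ContinuousSMul ℝ E] [LocallyConvexSpace ℝ E] [T2Space E]
  [MeasurableSpace E] [BorelSpace E]

def MetricConvexCompactness (E : Type*) [AddCommGroup E] [Module ℝ E] [TopologicalSpace E] : Prop :=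
  ∀ K : Set E, IsCompact K → TopologicalSpace.MetrizableSpace K →
    IsCompact (closure (convexHull ℝ K))

def MetricallyRegular {X : Type*} [TopologicalSpace X] [MeasurableSpace X]
    (ν : Measure X) : Prop :=
  ∀ B : Set X, MeasurableSet B →
    ν B = ⨆ (K : Set X) (_ : K ⊆ B) (_ : IsCompact K)
      (_ : TopologicalSpace.MetrizableSpace K), ν K

def IsBarycenter (μ : Measure E) (r : E) : Prop :=
  ∀ e' : E →L[ℝ] ℝ, Integrable (fun y => e' y) μ ∧ e' r = ∫ y, e' y ∂μ

lemma aux_bounded_cch {s : Set E} (hs : IsVonNBounded ℝ s) :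
    IsVonNBounded ℝ (closure (convexHull ℝ s)) := by
  intro V hV
  obtain ⟨C, hC0, hCc, hCV⟩ := exists_mem_nhds_isClosed_subset hV
  obtain ⟨W, ⟨hW0, hWconv⟩, hWC⟩ := (LocallyConvexSpace.convex_basis_zero ℝ E).mem_iff.mp hC0
  obtain ⟨r, hr⟩ := absorbs_iff_norm.mp (hs hW0)
  rw [absorbs_iff_norm]
  refine ⟨max r 1, fun c hc => ?_⟩
  have hc1 : (1:ℝ) ≤ ‖c‖ := le_trans (le_max_right _ _) hc
  have hc0 : c ≠ 0 := by
    intro h; rw [h, norm_zero] at hc1; linarith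
  have h1 : convexHull ℝ s ⊆ c • W := by
    calc convexHull ℝ s ⊆ convexHull ℝ (c • W) := convexHull_mono (hr c (le_trans (le_max_left _ _) hc))
    _ = c • convexHull ℝ W := convexHull_smul c W
    _ = c • W := by rw [hWconv.convexHull_eq]
  calc closure (convexHull ℝ s) ⊆ closure (c • W) := closure_mono h1
    _ = c • closure W := closure_smul₀ c W
    _ ⊆ c • V := smul_set_mono (le_trans (closure_mono hWC) (by rw [hCc.closure_eq]; exact hCV))

lemma aux_mem_cch {S : Set E} (hSne : S.Nonempty) {x : E}
    (hx : ∀ e' : E →L[ℝ] ℝ, |e' x| ≤ sSup ((fun z => |e' z|) '' S)) :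
    x ∈ closure (convexHull ℝ (S ∪ -S)) := by
  by_contra hmem
  obtain ⟨f, u, hfa, hu⟩ := geometric_hahn_banach_closed_point
    ((convex_convexHull ℝ _).closure) isClosed_closure hmem
  have hsub : S ∪ -S ⊆ closure (convexHull ℝ (S ∪ -S)) :=
    (subset_convexHull ℝ _).trans subset_closure
  have hb : ∀ z ∈ S, |f z| < u := by
    intro z hz
    have h1 : f z < u := hfa _ (hsub (Or.inl hz))
    have h2 : f (-z) < u := hfa _ (hsub (Or.inr (by simpa using hz)))
    rw [map_neg] at h2
    rw [abs_lt]; constructor <;> linarith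
  have hS : sSup ((fun z => |f z|) '' S) ≤ u := by
    apply csSup_le (hSne.image _)
    rintro y ⟨z, hz, rfl⟩
    exact (hb z hz).le
  have := hx f
  have : |f x| ≤ u := le_trans this hS
  have := le_abs_self (f x)
  linarith

lemma aux_metrizable {f : ℕ → E} {x : E} (hf : Tendsto f atTop (𝓝 x)) :
    TopologicalSpace.MetrizableSpace (insert x (Set.range f) : Set E) := by
  set L : Set E := insert x (Set.range f) with hL
  have hLc : IsCompact L := hf.isCompact_insert_range
  have hLcount : L.Countable := (countable_range f).insert x
  haveI : Countable ↥L := hLcount.to_subtype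
  haveI : CompactSpace ↥L := isCompact_iff_compactSpace.mp hLc
  have hxL : x ∈ L := mem_insert _ _
  -- key: every point of L other than x is isolated
  have hiso : ∀ a : ↥L, (a : E) ≠ x → IsOpen ({a} : Set ↥L) := by
    intro a ha
    obtain ⟨U₀, V₀, hU₀, hV₀, haU₀, hxV₀, hdisj⟩ := t2_separation ha
    have hev : {n : ℕ | f n ∉ V₀}.Finite := by
      have : ∀ᶠ n in cofinite, f n ∈ V₀ := by
        rw [Nat.cofinite_eq_atTop]; exact hf (hV₀.mem_nhds hxV₀)
      simpa [Filter.eventually_cofinite] using this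
    set G : Set E := insert x (f '' {n : ℕ | f n ∉ V₀}) with hG
    have hGfin : G.Finite := (hev.image f).insert x
    have hULG : U₀ ∩ L ⊆ G := by
      rintro z ⟨hzU, hzL⟩
      rcases hzL with rfl | ⟨n, rfl⟩
      · exact mem_insert _ _
      · refine mem_insert_of_mem _ ⟨n, ?_, rfl⟩
        intro hnV
        exact (disjoint_left.mp hdisj hzU) hnV
    set U : Set E := U₀ \ (G \ {(a : E)}) with hU
    have hUopen : IsOpen U := hU₀.sdiff ((hGfin.diff).isClosed)
    have : {a} = (Subtype.val ⁻¹' U : Set ↥L) := by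
      ext b
      simp only [mem_singleton_iff, mem_preimage, hU, mem_diff, mem_singleton_iff]
      constructor
      · rintro rfl
        exact ⟨haU₀, fun h => h.2 rfl⟩
      · rintro ⟨hbU, hb2⟩
        have hbG : (b : E) ∈ G := hULG ⟨hbU, b.2⟩
        have : (b : E) = (a : E) := by
          by_contra hne
          exact hb2 ⟨hbG, hne⟩
        exact Subtype.ext this
    rw [this]
    exact hUopen.preimage continuous_subtype_val
  -- every open set containing x (in L) is cofinite
  have hcof : ∀ u : Set ↥L, IsOpen u → (⟨x, hxL⟩ : ↥L) ∈ u → uᶜ.Finite := by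
    intro u hu hxu
    obtain ⟨U, hUopen, hUeq⟩ := isOpen_induced_iff.mp hu
    have hxU : x ∈ U := by rw [← hUeq] at hxu; exact hxu
    have hev : {n : ℕ | f n ∉ U}.Finite := by
      have : ∀ᶠ n in cofinite, f n ∈ U := by
        rw [Nat.cofinite_eq_atTop]; exact hf (hUopen.mem_nhds hxU)
      simpa [Filter.eventually_cofinite] using this
    have : uᶜ ⊆ Subtype.val ⁻¹' (f '' {n : ℕ | f n ∉ U}) := by
      intro b hb
      have hbU : (b : E) ∉ U := by
        intro h
        apply hb
        rw [← hUeq]; exact h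
      rcases b.2 with hbx | ⟨n, hn⟩
      · exact absurd (hbx ▸ hxU) hbU
      · exact ⟨n, by show f n ∉ U; rw [hn]; exact hbU, hn⟩
    exact (Finite.preimage (Subtype.val_injective.injOn) (hev.image f)).subset this
  -- basis of finite open sets and cofinite open sets
  set 𝒞 : Set (Set ↥L) := {s | IsOpen s ∧ (s.Finite ∨ sᶜ.Finite)} with h𝒞
  have hbasis : IsTopologicalBasis 𝒞 := by
    apply isTopologicalBasis_of_isOpen_of_nhds (fun u hu => hu.1)
    intro a u hau hu
    by_cases ha : (a : E) = x
    · refine ⟨u, ⟨hu, Or.inr ?_⟩, hau, subset_rfl⟩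
      have : a = (⟨x, hxL⟩ : ↥L) := Subtype.ext ha
      exact hcof u hu (this ▸ hau)
    · exact ⟨{a}, ⟨hiso a ha, Or.inl (finite_singleton a)⟩, rfl, singleton_subset_iff.mpr hau⟩
  have h1 : {s : Set ↥L | s.Finite}.Countable := by
    apply Set.Countable.mono _ (countable_setOf_finite_subset (countable_univ (α := ↥L)))
    intro s hs
    exact ⟨hs, subset_univ s⟩
  have h2 : {s : Set ↥L | sᶜ.Finite}.Countable :=
    h1.preimage compl_injective
  have hcount : 𝒞.Countable := by
    apply Set.Countable.mono (s₂ := {s : Set ↥L | s.Finite} ∪ {s : Set ↥L | sᶜ.Finite}) _ (h1.union h2)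
    rintro s ⟨-, hs | hs⟩
    · exact Or.inl hs
    · exact Or.inr hs
  haveI := hbasis.secondCountableTopology hcount
  exact metrizableSpace_of_t3_secondCountable ↥L

lemma aux_compact_barycenter {K : Set E} (hK : IsCompact K)
    (hC : IsCompact (closure (convexHull ℝ K)))
    (ν : Measure E) [IsFiniteMeasure ν] (hν : ν Kᶜ = 0) (hpos : ν Set.univ ≠ 0) :
    ∃ b ∈ closure (convexHull ℝ K), ∀ e' : E →L[ℝ] ℝ,
      e' ((ν Set.univ).toReal • b) = ∫ y, e' y ∂ν := by
  classical
  set C := closure (convexHull ℝ K) with hCdef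
  set c : ℝ := (ν Set.univ).toReal with hc
  have hc0 : 0 < c := ENNReal.toReal_pos hpos (measure_ne_top ν _)
  have hKne : K.Nonempty := by
    rcases K.eq_empty_or_nonempty with rfl | h
    · exfalso; apply hpos
      have : ν Set.univ ≤ ν (∅ : Set E)ᶜ := le_of_eq (by simp)
      simpa using le_antisymm (this.trans hν.le) zero_le
    · exact h
  have hCconv : Convex ℝ C := (convex_convexHull ℝ K).closure
  have hKC : K ⊆ C := (subset_convexHull ℝ K).trans subset_closure
  have hint : ∀ g : E →L[ℝ] ℝ, Integrable (fun y => g y) ν := by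
    intro g
    obtain ⟨z, hzK, hz⟩ := hK.exists_isMaxOn hKne (g.continuous.abs.continuousOn)
    refine Integrable.mono' (integrable_const (|g z|)) g.continuous.aestronglyMeasurable ?_
    refine measure_mono_null (fun y hy => ?_) hν
    intro hyK
    exact hy (by simpa [Real.norm_eq_abs] using hz hyK)
  have hbnd : ∀ g : E →L[ℝ] ℝ, ∀ x₀ : E, IsMaxOn (fun y => g y) K x₀ →
      ∫ y, g y ∂ν ≤ c * g x₀ := by
    intro g x₀ hmax
    have h1 : ∫ y, g y ∂ν ≤ ∫ _, g x₀ ∂ν := by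
      refine integral_mono_ae (hint g) (integrable_const _) ?_
      refine measure_mono_null (fun y hy => ?_) hν
      intro hyK
      exact hy (hmax hyK)
    simpa [mul_comm] using h1.trans_eq (by simp [integral_const, hc, mul_comm, measureReal_def])
  by_contra hcon
  push_neg at hcon
  set Z : (E →L[ℝ] ℝ) → Set E := fun g => {y : E | g y = c⁻¹ * ∫ t, g t ∂ν} with hZ
  have hZclosed : ∀ g, IsClosed (Z g) :=
    fun g => isClosed_eq g.continuous continuous_const
  have hempty : C ∩ ⋂ g, Z g = ∅ := by
    rw [eq_empty_iff_forall_notMem]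
    rintro y ⟨hyC, hyZ⟩
    rw [mem_iInter] at hyZ
    obtain ⟨g, hg⟩ := hcon y hyC
    apply hg
    have := hyZ g
    rw [mem_setOf_eq] at this
    rw [_root_.map_smul, smul_eq_mul, this]
    field_simp
  obtain ⟨t, ht⟩ := hC.elim_finite_subfamily_closed Z hZclosed hempty
  -- build a point in the finite intersection, contradiction
  set T : E →L[ℝ] (↥t → ℝ) := ContinuousLinearMap.pi (fun i : ↥t => (i : E →L[ℝ] ℝ)) with hT
  set A : Set (↥t → ℝ) := T '' C with hA
  have hAcomp : IsCompact A := hC.image T.continuous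
  have hAconv : Convex ℝ A := hCconv.linear_image T.toLinearMap
  set p : ↥t → ℝ := fun i => c⁻¹ * ∫ y, (i : E →L[ℝ] ℝ) y ∂ν with hp
  by_cases hpA : p ∈ A
  · obtain ⟨b, hbC, hbp⟩ := hpA
    have : b ∈ C ∩ ⋂ g ∈ t, Z g := by
      refine ⟨hbC, ?_⟩
      rw [mem_iInter₂]
      intro g hg
      have := congrFun hbp ⟨g, hg⟩
      simpa [hT, hZ, hp] using this
    rw [ht] at this
    exact this
  · obtain ⟨f, u, hfa, hu⟩ := geometric_hahn_banach_closed_point hAconv hAcomp.isClosed hpA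
    set g : E →L[ℝ] ℝ := f.comp T with hg
    set w : ↥t → ℝ := fun i => f (Pi.single i 1) with hw
    have hfz : ∀ z : ↥t → ℝ, f z = ∑ i, z i * w i := by
      intro z
      have hzrep : z = ∑ i : ↥t, z i • Pi.single i (1:ℝ) := by
        funext j
        simp [Finset.sum_apply, Pi.single_apply]
      calc f z = f (∑ i : ↥t, z i • Pi.single i (1:ℝ)) := by rw [← hzrep]
        _ = ∑ i : ↥t, z i * f (Pi.single i 1) := by
            rw [map_sum]; simp [smul_eq_mul]
        _ = ∑ i, z i * w i := rfl
    have hgy : ∀ y : E, g y = ∑ i : ↥t, ((i : E →L[ℝ] ℝ) y) * w i := by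
      intro y
      rw [hg, ContinuousLinearMap.comp_apply, hfz]
      rfl
    have hfp : f p = c⁻¹ * ∫ y, g y ∂ν := by
      rw [hfz]
      have : ∫ y, g y ∂ν = ∑ i : ↥t, (∫ y, (i : E →L[ℝ] ℝ) y ∂ν) * w i := by
        rw [show (fun y => g y) = fun y => ∑ i : ↥t, ((i : E →L[ℝ] ℝ) y) * w i from funext hgy]
        rw [integral_finset_sum _ (fun i _ => (hint _).mul_const _)]
        simp [integral_mul_const]
      rw [this, Finset.mul_sum]
      congr 1
      funext i
      ring
    obtain ⟨x₀, hx₀K, hmax⟩ := hK.exists_isMaxOn hKne g.continuous.continuousOn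
    have h1 : f p ≤ g x₀ := by
      rw [hfp]
      have := hbnd g x₀ hmax
      rw [inv_mul_le_iff₀ hc0]
      linarith [this]
    have h2 : g x₀ < u := hfa (T x₀) ⟨x₀, hKC hx₀K, rfl⟩
    linarith

theorem stmt13 (hE : MetricConvexCompactness E)
    (μ : Measure E) [IsFiniteMeasure μ] (hreg : MetricallyRegular μ)
    (D : Set E) (hDb : Bornology.IsVonNBounded ℝ D) (hconc : μ Dᶜ = 0) :
    ∃ r : E, IsBarycenter μ r := by
  classical
  by_cases hm : μ Set.univ = 0
  · refine ⟨0, fun e' => ?_⟩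
    rw [MeasureTheory.Measure.measure_univ_eq_zero.mp hm]
    exact ⟨integrable_zero_measure, by simp [integral_zero_measure]⟩
  have htop : μ Set.univ ≠ ⊤ := measure_ne_top μ _
  set m : ℝ≥0∞ := μ Set.univ with hmdef
  set Dc : Set E := closure D with hDc
  have hDcb : Bornology.IsVonNBounded ℝ Dc :=
    (aux_bounded_cch hDb).subset (closure_mono (subset_convexHull ℝ D))
  have hDcnull : μ Dcᶜ = 0 :=
    measure_mono_null (Set.compl_subset_compl.mpr subset_closure) hconc
  have hDcne : Dc.Nonempty := by
    rcases Dc.eq_empty_or_nonempty with h | h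
    · exfalso; apply hm
      have : Dcᶜ = Set.univ := by rw [h]; simp
      rw [hmdef, ← this]; exact hDcnull
    · exact h
  -- sSup bound for functionals on Dc
  set s' : (E →L[ℝ] ℝ) → ℝ := fun e' => sSup ((fun z => |e' z|) '' Dc) with hs'
  have hbdd : ∀ e' : E →L[ℝ] ℝ, BddAbove ((fun z => |e' z|) '' Dc) := by
    intro e'
    have h1 : Bornology.IsVonNBounded ℝ (⇑e' '' Dc) := hDcb.image e'
    rw [NormedSpace.isVonNBounded_iff, isBounded_iff_forall_norm_le] at h1
    obtain ⟨C, hC⟩ := h1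
    refine ⟨C, ?_⟩
    rintro y ⟨z, hz, rfl⟩
    simpa [Real.norm_eq_abs] using hC _ ⟨z, hz, rfl⟩
  have hleD : ∀ (e' : E →L[ℝ] ℝ) (z : E), z ∈ Dc → |e' z| ≤ s' e' :=
    fun e' z hz => le_csSup (hbdd e') ⟨z, hz, rfl⟩
  have hs'nonneg : ∀ e', 0 ≤ s' e' := by
    intro e'
    obtain ⟨z, hz⟩ := hDcne
    exact le_trans (abs_nonneg _) (hleD e' z hz)
  have hae : ∀ e' : E →L[ℝ] ℝ, ∀ᵐ y ∂μ, |e' y| ≤ s' e' := by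
    intro e'
    refine measure_mono_null (fun y hy => ?_) hDcnull
    intro hyD
    exact hy (hleD e' y hyD)
  have hint : ∀ e' : E →L[ℝ] ℝ, Integrable (fun y => e' y) μ := by
    intro e'
    refine Integrable.mono' (integrable_const (s' e')) e'.continuous.aestronglyMeasurable ?_
    simpa [Real.norm_eq_abs] using hae e'
  -- choose compact metrizable sets of almost full measure
  set δ : ℕ → ℝ≥0∞ := fun n => min (ENNReal.ofReal ((1/4:ℝ)^n/4)) m with hδ
  have hδpos : ∀ n, 0 < δ n :=
    fun n => lt_min (ENNReal.ofReal_pos.mpr (by positivity)) (pos_iff_ne_zero.mpr hm)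
  have hδm : ∀ n, δ n ≤ m := fun n => min_le_right _ _
  have hex : ∀ n : ℕ, ∃ K : Set E, IsCompact K ∧ TopologicalSpace.MetrizableSpace K ∧
      0 < μ K ∧ μ Kᶜ < δ n := by
    intro n
    have hlt : m - δ n < μ Set.univ := ENNReal.sub_lt_self htop hm (hδpos n).ne'
    rw [hreg Set.univ MeasurableSet.univ] at hlt
    rw [lt_iSup_iff] at hlt
    obtain ⟨K, hlt⟩ := hlt
    rw [lt_iSup_iff] at hlt
    obtain ⟨-, hlt⟩ := hlt
    rw [lt_iSup_iff] at hlt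
    obtain ⟨hKcomp, hlt⟩ := hlt
    rw [lt_iSup_iff] at hlt
    obtain ⟨hKmet, hlt⟩ := hlt
    refine ⟨K, hKcomp, hKmet, lt_of_le_of_lt zero_le hlt, ?_⟩
    by_contra hcon
    push_neg at hcon
    have hδtop : δ n ≠ ⊤ := ((hδm n).trans_lt htop.lt_top).ne
    have h1 : (m - δ n) + δ n < μ K + δ n := ENNReal.add_lt_add_right hδtop hlt
    have h2 : μ K + δ n ≤ μ K + μ Kᶜ := add_le_add_right hcon _
    rw [tsub_add_cancel_of_le (hδm n)] at h1
    rw [measure_add_measure_compl hKcomp.measurableSet] at h2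
    exact lt_irrefl _ (h1.trans_le h2)
  choose Kseq hKc hKm hKpos hKcompl using hex
  -- partial barycenters
  have hbary : ∀ n : ℕ, ∃ b ∈ closure (convexHull ℝ (Kseq n)), ∀ e' : E →L[ℝ] ℝ,
      e' (((μ.restrict (Kseq n)) Set.univ).toReal • b) = ∫ y, e' y ∂(μ.restrict (Kseq n)) := by
    intro n
    refine aux_compact_barycenter (hKc n) (hE _ (hKc n) (hKm n)) (μ.restrict (Kseq n)) ?_ ?_
    · rw [Measure.restrict_apply (hKc n).measurableSet.compl]
      simp
    · rw [Measure.restrict_apply_univ]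
      exact (hKpos n).ne'
  choose b hbC hb using hbary
  set r : ℕ → E := fun n => ((μ.restrict (Kseq n)) Set.univ).toReal • b n with hr
  have hre : ∀ (n : ℕ) (e' : E →L[ℝ] ℝ), e' (r n) = ∫ y in Kseq n, e' y ∂μ :=
    fun n e' => hb n e'
  -- tail estimate
  have htail : ∀ (n : ℕ) (e' : E →L[ℝ] ℝ),
      |(∫ y, e' y ∂μ) - e' (r n)| ≤ s' e' * (μ (Kseq n)ᶜ).toReal := by
    intro n e'
    rw [hre n e']
    have hsplit : (∫ y, e' y ∂μ) - ∫ y in Kseq n, e' y ∂μ = ∫ y in (Kseq n)ᶜ, e' y ∂μ := by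
      rw [← integral_add_compl (hKc n).measurableSet (hint e')]
      ring
    rw [hsplit]
    calc |∫ y in (Kseq n)ᶜ, e' y ∂μ| ≤ ∫ y in (Kseq n)ᶜ, |e' y| ∂μ := by
          simpa [Real.norm_eq_abs] using norm_integral_le_integral_norm (μ := μ.restrict (Kseq n)ᶜ) (fun y => e' y)
      _ ≤ ∫ _ in (Kseq n)ᶜ, s' e' ∂μ := by
          refine integral_mono_ae ((hint e').abs.restrict) (integrable_const _) ?_
          exact ae_restrict_of_ae (hae e')
      _ = (μ (Kseq n)ᶜ).toReal • s' e' := setIntegral_const _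
      _ = s' e' * (μ (Kseq n)ᶜ).toReal := by rw [smul_eq_mul, mul_comm]
  have htb : ∀ n : ℕ, (μ (Kseq n)ᶜ).toReal < (1/4:ℝ)^n/4 := by
    intro n
    have h1 : μ (Kseq n)ᶜ < ENNReal.ofReal ((1/4:ℝ)^n/4) := lt_of_lt_of_le (hKcompl n) (min_le_left _ _)
    exact (ENNReal.lt_ofReal_iff_toReal_lt (measure_ne_top μ _)).mp h1
  -- increments
  set a : ℕ → E := fun n => (2:ℝ)^(n+1) • (r (n+1) - r n) with ha
  have hda : ∀ n : ℕ, r (n+1) - r n = ((2:ℝ)^(n+1))⁻¹ • a n := by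
    intro n
    rw [ha]
    rw [smul_smul, inv_mul_cancel₀ (by positivity), one_smul]
  have haw : ∀ n : ℕ, (2:ℝ)^n • a n ∈ closure (convexHull ℝ (Dc ∪ -Dc)) := by
    intro n
    refine aux_mem_cch hDcne ?_
    intro e'
    have h1 : |e' (r (n+1) - r n)| ≤ s' e' * ((1/4:ℝ)^n/2) := by
      have e1 := htail (n+1) e'
      have e2 := htail n e'
      have b1 : s' e' * (μ (Kseq (n+1))ᶜ).toReal ≤ s' e' * ((1/4:ℝ)^(n+1)/4) :=
        mul_le_mul_of_nonneg_left (htb (n+1)).le (hs'nonneg e')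
      have b2 : s' e' * (μ (Kseq n)ᶜ).toReal ≤ s' e' * ((1/4:ℝ)^n/4) :=
        mul_le_mul_of_nonneg_left (htb n).le (hs'nonneg e')
      have : |e' (r (n+1) - r n)| ≤ s' e' * ((1/4:ℝ)^(n+1)/4) + s' e' * ((1/4:ℝ)^n/4) := by
        rw [map_sub]
        calc |e' (r (n+1)) - e' (r n)|
            = |(e' (r (n+1)) - ∫ y, e' y ∂μ) + ((∫ y, e' y ∂μ) - e' (r n))| := by ring_nf
          _ ≤ |e' (r (n+1)) - ∫ y, e' y ∂μ| + |(∫ y, e' y ∂μ) - e' (r n)| := abs_add_le _ _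
          _ ≤ s' e' * (μ (Kseq (n+1))ᶜ).toReal + s' e' * (μ (Kseq n)ᶜ).toReal := by
              rw [abs_sub_comm (e' (r (n+1)))]
              exact add_le_add (htail (n+1) e') (htail n e')
          _ ≤ _ := add_le_add b1 b2
      refine this.trans ?_
      rw [← mul_add]
      refine mul_le_mul_of_nonneg_left ?_ (hs'nonneg e')
      rw [pow_succ]
      ring_nf
      nlinarith [pow_pos (by norm_num : (0:ℝ) < 1/4) n]
    calc |e' ((2:ℝ)^n • a n)| = (2:ℝ)^n * (2:ℝ)^(n+1) * |e' (r (n+1) - r n)| := by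
          rw [ha]
          simp only [_root_.map_smul, smul_eq_mul, abs_mul,
            abs_of_pos (pow_pos (by norm_num : (0:ℝ) < 2) _)]
          ring
      _ ≤ (2:ℝ)^n * (2:ℝ)^(n+1) * (s' e' * ((1/4:ℝ)^n/2)) := by
          refine mul_le_mul_of_nonneg_left h1 (by positivity)
      _ = s' e' * ((2:ℝ)^n * (2:ℝ)^(n+1) * (1/4:ℝ)^n / 2) := by ring
      _ ≤ s' e' := by
          have h4 : ((1:ℝ)/4)^n = ((4:ℝ)^n)⁻¹ := by
            rw [div_pow, one_pow, one_div]
          have h44 : (4:ℝ)^n = (2:ℝ)^n * (2:ℝ)^n := by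
            rw [← mul_pow]; norm_num
          have : (2:ℝ)^n * (2:ℝ)^(n+1) * (1/4:ℝ)^n / 2 = 1 := by
            rw [h4, h44, pow_succ]
            field_simp
          rw [this, mul_one]
  -- a n tends to 0
  set W : Set E := closure (convexHull ℝ (Dc ∪ -Dc)) with hW
  have hWb : Bornology.IsVonNBounded ℝ W := aux_bounded_cch (hDcb.union hDcb.neg)
  have hatend : Tendsto a atTop (𝓝 0) := by
    rw [tendsto_atTop_nhds]
    intro U hU0 hUopen
    obtain ⟨ρ, hρ⟩ := absorbs_iff_norm.mp (hWb (hUopen.mem_nhds hU0))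
    obtain ⟨N, hN⟩ := pow_unbounded_of_one_lt ρ (by norm_num : (1:ℝ) < 2)
    refine ⟨N, fun n hn => ?_⟩
    have h2 : ρ ≤ ‖(2:ℝ)^n‖ := by
      rw [Real.norm_eq_abs, abs_of_pos (by positivity)]
      exact hN.le.trans (pow_le_pow_right₀ (by norm_num) hn)
    have h3 : (2:ℝ)^n • a n ∈ (2:ℝ)^n • U := hρ _ h2 (haw n)
    obtain ⟨u, huU, hu⟩ := Set.mem_smul_set.mp h3
    have : u = a n := by
      have := congrArg (fun z => ((2:ℝ)^n)⁻¹ • z) hu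
      simpa [smul_smul, inv_mul_cancel₀ (show ((2:ℝ)^n) ≠ 0 by positivity)] using this
    rwa [← this]
  -- the compact convex set Q
  set L : Set E := insert 0 (Set.range a) with hLdef
  have hLcomp : IsCompact L := hatend.isCompact_insert_range
  have hLmet : TopologicalSpace.MetrizableSpace L := aux_metrizable hatend
  have hQ : IsCompact (closure (convexHull ℝ L)) := hE L hLcomp hLmet
  set Q : Set E := closure (convexHull ℝ L) with hQdef
  -- partial sums lie in Q
  have hgeom : ∀ n : ℕ, ∑ k ∈ Finset.range n, ((2:ℝ)^(k+1))⁻¹ = 1 - ((2:ℝ)⁻¹)^n := by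
    intro n
    induction n with
    | zero => simp
    | succ n ih =>
        rw [Finset.sum_range_succ, ih, pow_succ, pow_succ]
        rw [mul_inv, ← inv_pow]
        ring
  have hsums : ∀ n : ℕ, r n - r 0 ∈ Q := by
    intro n
    have htel : r n - r 0 = ∑ k ∈ Finset.range n, (r (k+1) - r k) := (Finset.sum_range_sub r n).symm
    have hQconv : Convex ℝ (convexHull ℝ L) := convex_convexHull ℝ L
    set w : ℕ → ℝ := fun k => if k < n then ((2:ℝ)^(k+1))⁻¹ else 1 - ∑ j ∈ Finset.range n, ((2:ℝ)^(j+1))⁻¹ with hw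
    set z : ℕ → E := fun k => if k < n then a k else 0 with hz
    have hsum1 : ∑ k ∈ Finset.range (n+1), w k = 1 := by
      rw [Finset.sum_range_succ]
      have : ∀ k ∈ Finset.range n, w k = ((2:ℝ)^(k+1))⁻¹ := by
        intro k hk
        rw [hw]
        simp [Finset.mem_range.mp hk]
      rw [Finset.sum_congr rfl this]
      rw [hw]
      simp
    have hwnn : ∀ k ∈ Finset.range (n+1), 0 ≤ w k := by
      intro k _
      rw [hw]
      by_cases hkn : k < n
      · simp only [hkn, if_true]
        positivity
      · simp only [hkn, if_false]
        rw [hgeom n]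
        have : ((2:ℝ)⁻¹)^n > 0 := by positivity
        linarith
    have hzL : ∀ k ∈ Finset.range (n+1), z k ∈ convexHull ℝ L := by
      intro k _
      rw [hz]
      by_cases hkn : k < n
      · simp only [hkn, if_true]
        exact subset_convexHull ℝ L (Set.mem_insert_of_mem _ (Set.mem_range_self k))
      · simp only [hkn, if_false]
        exact subset_convexHull ℝ L (Set.mem_insert _ _)
    have hmem := hQconv.sum_mem hwnn hsum1 hzL
    have heq : ∑ k ∈ Finset.range (n+1), w k • z k = r n - r 0 := by
      rw [Finset.sum_range_succ]
      have h0 : w n • z n = 0 := by rw [hz]; simp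
      rw [h0, add_zero]
      have : ∀ k ∈ Finset.range n, w k • z k = r (k+1) - r k := by
        intro k hk
        have hkn := Finset.mem_range.mp hk
        rw [hw, hz]
        simp only [hkn, if_true]
        exact (hda k).symm
      rw [Finset.sum_congr rfl this, ← htel]
    rw [heq] at hmem
    exact subset_closure hmem
  -- cluster point
  have hmapf : Filter.map (fun n => r n - r 0) atTop ≤ Filter.principal Q := by
    rw [Filter.le_principal_iff, Filter.mem_map]
    exact Filter.Eventually.of_forall hsums
  obtain ⟨x, hxQ, hx⟩ := hQ.exists_clusterPt hmapf
  refine ⟨r 0 + x, fun e' => ⟨hint e', ?_⟩⟩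
  -- e' (r n) tends to the integral
  have hconv : Tendsto (fun n => e' (r n)) atTop (𝓝 (∫ y, e' y ∂μ)) := by
    have h0 : Tendsto (fun n => e' (r n) - ∫ y, e' y ∂μ) atTop (𝓝 0) := by
      refine squeeze_zero_norm (f := fun n => e' (r n) - ∫ y, e' y ∂μ)
        (a := fun n => s' e' * ((1/4:ℝ)^n/4)) ?_ ?_
      · intro n
        rw [Real.norm_eq_abs, abs_sub_comm]
        exact (htail n e').trans (mul_le_mul_of_nonneg_left (htb n).le (hs'nonneg e'))
      · have h1 : Tendsto (fun n : ℕ => ((1/4:ℝ))^n) atTop (𝓝 0) :=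
          tendsto_pow_atTop_nhds_zero_of_lt_one (by norm_num) (by norm_num)
        have := (h1.const_mul (s' e' / 4))
        rw [mul_zero] at this
        refine this.congr (fun n => by ring)
    have := h0.add_const (∫ y, e' y ∂μ)
    rw [zero_add] at this
    refine this.congr (fun n => by ring)
  have hconv2 : Tendsto (fun n => e' (r n - r 0)) atTop (𝓝 ((∫ y, e' y ∂μ) - e' (r 0))) := by
    have := hconv.sub_const (e' (r 0))
    refine this.congr (fun n => by rw [map_sub])
  -- cluster point maps
  have hclx : ClusterPt (e' x) (Filter.map (fun n => e' (r n - r 0)) atTop) := by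
    refine hx.map (e'.continuous.continuousAt) ?_
    rw [Filter.tendsto_map'_iff]
    exact Filter.tendsto_map
  have hne : (𝓝 (e' x) ⊓ 𝓝 ((∫ y, e' y ∂μ) - e' (r 0))).NeBot := by
    haveI : (𝓝 (e' x) ⊓ Filter.map (fun n => e' (r n - r 0)) atTop).NeBot := hclx
    exact Filter.neBot_of_le (inf_le_inf_left _ hconv2)
  have hxval : e' x = (∫ y, e' y ∂μ) - e' (r 0) := t2_iff_nhds.mp inferInstance hne
  rw [map_add, hxval]
  ring
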